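/- Let $f$ be a face of $\mathcal{S}^n_+$ of the form $f = V\mathcal{S}^r_+ V^T$ where $V \in \mathbb{R}^{n\times r}$ has orthonormal columns, and let $W \in \mathcal{S}^n_+$ satisfy $WV = 0$ and $W + VV^T \succ 0$. Then $f = \mathcal{S}^n_+ \cap W^{\perp}$, i.e., a positive semidefinite matrix $X$ satisfies $\langle X, W \rangle = 0$ if and only if $X = VRV^T$ for some $R \in \mathcal{S}^r_+$. -/

import Mathlib

open Matrix

lemma trace_transpose_mul_self_eq_zero {m n : ℕ} {B : Matrix (Fin m) (Fin n) ℝ}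
    (h : (Bᵀ * B).trace = 0) : B = 0 := by
  have key : ∀ j, ∑ i, B i j * B i j = 0 := by
    have hnn : ∀ j ∈ Finset.univ, 0 ≤ ∑ i, B i j * B i j := by
      intro j _; exact Finset.sum_nonneg fun i _ => mul_self_nonneg _
    have := (Finset.sum_eq_zero_iff_of_nonneg hnn).mp ?_
    · intro j; exact this j (Finset.mem_univ j)
    · simpa [Matrix.trace, Matrix.mul_apply, Matrix.diag] using h
  ext i j
  have := key j
  have h2 : ∀ i ∈ Finset.univ, (0:ℝ) ≤ B i j * B i j := fun i _ => mul_self_nonneg _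
  have := (Finset.sum_eq_zero_iff_of_nonneg h2).mp this i (Finset.mem_univ i)
  simpa [mul_self_eq_zero] using this

open scoped MatrixOrder

theorem stmt10 {n r : ℕ} (V : Matrix (Fin n) (Fin r) ℝ) (hV : Vᵀ * V = 1)
    (W : Matrix (Fin n) (Fin n) ℝ) (hW : W.PosSemidef) (hWV : W * V = 0)
    (hWVV : (W + V * Vᵀ).PosDef) :
    ∀ X : Matrix (Fin n) (Fin n) ℝ, X.PosSemidef →
      ((X * W).trace = 0 ↔
        ∃ R : Matrix (Fin r) (Fin r) ℝ, R.PosSemidef ∧ X = V * R * Vᵀ) := by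
  intro X hX
  have hWs : Wᵀ = W := by
    rw [← Matrix.conjTranspose_eq_transpose_of_trivial]; exact hW.isHermitian.eq
  have hXs : Xᵀ = X := by
    rw [← Matrix.conjTranspose_eq_transpose_of_trivial]; exact hX.isHermitian.eq
  have hVW : Vᵀ * W = 0 := by
    calc Vᵀ * W = (W * V)ᵀ := by rw [Matrix.transpose_mul, hWs]
    _ = 0 := by rw [hWV]; simp
  constructor
  · intro htr
    set S := CFC.sqrt X with hSdef
    set T := CFC.sqrt W with hTdef
    have hSS : S * S = X := CFC.sqrt_mul_sqrt_self X hX.nonneg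
    have hTT : T * T = W := CFC.sqrt_mul_sqrt_self W hW.nonneg
    have hSsym : Sᵀ = S := by
      rw [← Matrix.conjTranspose_eq_transpose_of_trivial]; exact (CFC.sqrt_nonneg X).posSemidef.isHermitian.eq
    have hTsym : Tᵀ = T := by
      rw [← Matrix.conjTranspose_eq_transpose_of_trivial]; exact (CFC.sqrt_nonneg W).posSemidef.isHermitian.eq
    have htr2 : ((T * S)ᵀ * (T * S)).trace = 0 := by
      rw [Matrix.transpose_mul, hSsym, hTsym]
      calc (S * T * (T * S)).trace = (S * (T * T) * S).trace := by
            rw [Matrix.mul_assoc, Matrix.mul_assoc, Matrix.mul_assoc]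
      _ = (S * S * W).trace := by
            rw [hTT, Matrix.trace_mul_cycle, Matrix.mul_assoc]
      _ = 0 := by rw [hSS, htr]
    have hTS : T * S = 0 := trace_transpose_mul_self_eq_zero htr2
    have hWX : W * X = 0 := by
      calc W * X = T * (T * S) * S := by rw [← hTT, ← hSS]; simp [Matrix.mul_assoc]
      _ = 0 := by rw [hTS]; simp
    -- invertibility of M := W + V Vᵀ
    set M := W + V * Vᵀ with hM
    have hinv : IsUnit M.det := isUnit_iff_ne_zero.mpr (ne_of_gt hWVV.det_pos)
    have hMX : M * X = M * (V * Vᵀ * X) := by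
      have h1 : M * X = V * Vᵀ * X := by
        rw [hM, Matrix.add_mul, hWX, zero_add]
      have h2 : M * (V * Vᵀ * X) = V * Vᵀ * X := by
        rw [hM, Matrix.add_mul]
        have : W * (V * Vᵀ * X) = 0 := by
          rw [← Matrix.mul_assoc, ← Matrix.mul_assoc, hWV]; simp
        rw [this, zero_add]
        calc V * Vᵀ * (V * Vᵀ * X) = V * (Vᵀ * V) * (Vᵀ * X) := by
              simp [Matrix.mul_assoc]
        _ = V * Vᵀ * X := by rw [hV, Matrix.mul_one, Matrix.mul_assoc]
      rw [h1, h2]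
    have hXV : X = V * Vᵀ * X := by
      have := Matrix.invertibleOfIsUnitDet M hinv
      exact Matrix.mul_right_injective_of_invertible M hMX
    have hXV' : X = X * (V * Vᵀ) := by
      calc X = Xᵀ := hXs.symm
      _ = (V * Vᵀ * X)ᵀ := by rw [← hXV]
      _ = Xᵀ * (V * Vᵀ)ᵀ := by rw [Matrix.transpose_mul]
      _ = X * (V * Vᵀ) := by rw [hXs, Matrix.transpose_mul, Matrix.transpose_transpose]
    refine ⟨Vᵀ * X * V, ?_, ?_⟩
    · have := hX.conjTranspose_mul_mul_same V
      simpa using this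
    · calc X = V * Vᵀ * X := hXV
      _ = V * Vᵀ * (X * (V * Vᵀ)) := by rw [← hXV']
      _ = V * (Vᵀ * X * V) * Vᵀ := by simp [Matrix.mul_assoc]
  · rintro ⟨R, hR, rfl⟩
    have : V * R * Vᵀ * W = 0 := by
      rw [Matrix.mul_assoc, hVW]; simp
    rw [this, Matrix.trace_zero]
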